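/- Let λ, μ ≥ 0, f₁(x)=1/(λ+x), f₂(x)=1/(μ+x). Let Φ : Mₘ(ℂ) → Mₖ(ℂ) and Ψ : Mₙ(ℂ) → Mₖ(ℂ) be positive linear maps. Then the map (X,Y) ↦ Tr(Φ(f₁(X))^{1/2} Ψ(f₂(Y)) Φ(f₁(X))^{1/2}) is jointly convex on pairs of positive definite matrices, i.e., for positive definite X₁,X₂ ∈ Mₘ(ℂ), Y₁,Y₂ ∈ Mₙ(ℂ), t ∈ [0,1], applying the map to (tX₁+(1−t)X₂, tY₁+(1−t)Y₂) yields a value at most t times its value at (X₁,Y₁) plus (1−t) times its value at (X₂,Y₂). -/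

import Mathlib

open Matrix ComplexOrder

namespace Matrix.PosSemidef

noncomputable def sqrt {k : ℕ} {A : Matrix (Fin k) (Fin k) ℂ} (hA : A.PosSemidef) :
    Matrix (Fin k) (Fin k) ℂ :=
  hA.1.cfc Real.sqrt

open scoped MatrixOrder in
lemma posSemidef_sqrt {k : ℕ} {A : Matrix (Fin k) (Fin k) ℂ} (hA : A.PosSemidef) :
    hA.sqrt.PosSemidef := by
  unfold sqrt
  rw [← hA.1.cfc_eq]
  exact (cfc_nonneg (fun x _ => Real.sqrt_nonneg x) : 0 ≤ cfc Real.sqrt A).posSemidef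

lemma sqrt_mul_self {k : ℕ} {A : Matrix (Fin k) (Fin k) ℂ} (hA : A.PosSemidef) :
    hA.sqrt * hA.sqrt = A := by
  unfold sqrt
  rw [← hA.1.cfc_eq, ← cfc_mul Real.sqrt Real.sqrt A]
  conv_rhs => rw [← cfc_id ℝ A hA.1]
  refine cfc_congr fun x hx => ?_
  rw [hA.1.spectrum_real_eq_range_eigenvalues] at hx
  obtain ⟨i, rfl⟩ := hx
  exact Real.mul_self_sqrt (hA.eigenvalues_nonneg i)

end Matrix.PosSemidef

private lemma TJC.psd_trace_re_nonneg {k : ℕ} {M : Matrix (Fin k) (Fin k) ℂ}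
    (hM : M.PosSemidef) : 0 ≤ M.trace.re := by
  rw [Matrix.trace, Complex.re_sum]
  refine Finset.sum_nonneg fun i _ => ?_
  have h := hM.re_dotProduct_nonneg (Pi.single i 1)
  simpa [dotProduct, Matrix.mulVec, Pi.single_apply, Finset.sum_ite_eq] using h

private lemma TJC.trace_mul_psd_re_nonneg {k : ℕ} {A B : Matrix (Fin k) (Fin k) ℂ}
    (hA : A.PosSemidef) (hB : B.PosSemidef) : 0 ≤ ((A * B).trace).re := by
  have h1 : (hA.sqrt * B * hA.sqrt).trace = (A * B).trace := by
    rw [trace_mul_cycle, hA.sqrt_mul_self]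
  have h2 : (hA.sqrt * B * hA.sqrt).PosSemidef := by
    have := hB.conjTranspose_mul_mul_same hA.sqrt
    rwa [hA.posSemidef_sqrt.1.eq] at this
  rw [← h1]
  exact TJC.psd_trace_re_nonneg h2

private lemma TJC.posDef_conj {m : ℕ} {A B : Matrix (Fin m) (Fin m) ℂ}
    (hA : A.PosDef) (hB : B.IsHermitian) (hu : IsUnit B) : (B * A * B).PosDef := by
  refine Matrix.PosDef.of_dotProduct_mulVec_pos ?_ ?_
  · have : (B * A * B)ᴴ = Bᴴ * Aᴴ * Bᴴ := by
      rw [conjTranspose_mul, conjTranspose_mul, mul_assoc]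
    rw [Matrix.IsHermitian, this, hA.1.eq, hB.eq]
  · intro x hx
    have hBx : B *ᵥ x ≠ 0 := by
      intro h
      apply hx
      have hinj := Matrix.mulVec_injective_iff_isUnit.mpr hu
      have : B *ᵥ x = B *ᵥ 0 := by rw [h, Matrix.mulVec_zero]
      exact hinj this
    have key : star x ⬝ᵥ (B * A * B) *ᵥ x = star (B *ᵥ x) ⬝ᵥ A *ᵥ (B *ᵥ x) := by
      rw [star_mulVec, hB.eq, ← Matrix.mulVec_mulVec, ← Matrix.mulVec_mulVec,
        Matrix.dotProduct_mulVec (star x) B]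
    rw [key]
    exact hA.dotProduct_mulVec_pos hBx

private lemma TJC.sqrt_isUnit {m : ℕ} {A : Matrix (Fin m) (Fin m) ℂ} (hA : A.PosDef) :
    IsUnit hA.posSemidef.sqrt := by
  rw [Matrix.isUnit_iff_isUnit_det]
  have h : hA.posSemidef.sqrt.det * hA.posSemidef.sqrt.det = A.det := by
    rw [← Matrix.det_mul, hA.posSemidef.sqrt_mul_self]
  have hd : A.det ≠ 0 := by
    have := hA.isUnit
    rw [Matrix.isUnit_iff_isUnit_det] at this
    exact this.ne_zero
  exact Ne.isUnit fun h0 => hd (by rw [← h, h0, zero_mul])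

/-- `W * diagonal a * W⋆` for the eigenvector unitary `W`. -/
private noncomputable def TJC.Ma {m : ℕ} {U : Matrix (Fin m) (Fin m) ℂ}
    (hU : U.IsHermitian) (a : Fin m → ℝ) : Matrix (Fin m) (Fin m) ℂ :=
  (hU.eigenvectorUnitary : Matrix (Fin m) (Fin m) ℂ) * diagonal (fun i => (a i : ℂ)) *
    star (hU.eigenvectorUnitary : Matrix (Fin m) (Fin m) ℂ)

private noncomputable def TJC.Ci {m : ℕ} {U : Matrix (Fin m) (Fin m) ℂ}
    (hU : U.IsHermitian) (i : Fin m) : Matrix (Fin m) (Fin m) ℂ :=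
  (hU.eigenvectorUnitary : Matrix (Fin m) (Fin m) ℂ) * diagonal (Pi.single i (1:ℂ)) *
    star (hU.eigenvectorUnitary : Matrix (Fin m) (Fin m) ℂ)

namespace TJC

variable {m : ℕ} {U : Matrix (Fin m) (Fin m) ℂ}

private lemma unit_mul_star (hU : U.IsHermitian) :
    (hU.eigenvectorUnitary : Matrix (Fin m) (Fin m) ℂ) *
      star (hU.eigenvectorUnitary : Matrix (Fin m) (Fin m) ℂ) = 1 :=
  (Matrix.mem_unitaryGroup_iff).mp hU.eigenvectorUnitary.2

private lemma star_mul_unit (hU : U.IsHermitian) :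
    star (hU.eigenvectorUnitary : Matrix (Fin m) (Fin m) ℂ) *
      (hU.eigenvectorUnitary : Matrix (Fin m) (Fin m) ℂ) = 1 :=
  (Matrix.mem_unitaryGroup_iff').mp hU.eigenvectorUnitary.2

private lemma Ma_eig (hU : U.IsHermitian) : Ma hU hU.eigenvalues = U := by
  rw [Ma]; exact hU.spectral_theorem.symm

private lemma Ma_one (hU : U.IsHermitian) : Ma hU (fun _ => 1) = 1 := by
  rw [Ma]
  have : diagonal (fun _ : Fin m => ((1:ℝ) : ℂ)) = 1 := by simp
  rw [this, mul_one, unit_mul_star hU]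

private lemma Ma_mul (hU : U.IsHermitian) (a b : Fin m → ℝ) :
    Ma hU a * Ma hU b = (hU.eigenvectorUnitary : Matrix (Fin m) (Fin m) ℂ) *
      diagonal (fun i => ((a i : ℂ) * (b i : ℂ))) *
      star (hU.eigenvectorUnitary : Matrix (Fin m) (Fin m) ℂ) := by
  rw [Ma, Ma]
  calc (hU.eigenvectorUnitary : Matrix (Fin m) (Fin m) ℂ) * diagonal (fun i => (a i : ℂ)) *
      star (hU.eigenvectorUnitary : Matrix (Fin m) (Fin m) ℂ) *
      ((hU.eigenvectorUnitary : Matrix (Fin m) (Fin m) ℂ) * diagonal (fun i => (b i : ℂ)) *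
      star (hU.eigenvectorUnitary : Matrix (Fin m) (Fin m) ℂ))
      = (hU.eigenvectorUnitary : Matrix (Fin m) (Fin m) ℂ) * diagonal (fun i => (a i : ℂ)) *
        (star (hU.eigenvectorUnitary : Matrix (Fin m) (Fin m) ℂ) *
        (hU.eigenvectorUnitary : Matrix (Fin m) (Fin m) ℂ)) * diagonal (fun i => (b i : ℂ)) *
        star (hU.eigenvectorUnitary : Matrix (Fin m) (Fin m) ℂ) := by
          simp only [mul_assoc]
    _ = _ := by
          rw [star_mul_unit hU, mul_one, mul_assoc _ (diagonal _) (diagonal _),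
            diagonal_mul_diagonal]

private lemma Ma_inv (hU : U.PosDef) : Ma hU.1 (fun i => (hU.1.eigenvalues i)⁻¹) = U⁻¹ := by
  symm
  apply Matrix.inv_eq_left_inv
  have key := Ma_mul hU.1 (fun i => (hU.1.eigenvalues i)⁻¹) hU.1.eigenvalues
  rw [Ma_eig] at key
  rw [key]
  have h2 : (fun i => ((((hU.1.eigenvalues i)⁻¹ : ℝ) : ℂ) * ((hU.1.eigenvalues i : ℝ) : ℂ)))
      = fun _ => (1 : ℂ) := by
    funext i
    have hne : (hU.1.eigenvalues i : ℝ) ≠ 0 := (hU.eigenvalues_pos i).ne'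
    push_cast
    field_simp
  rw [h2]
  have : diagonal (fun _ : Fin m => (1 : ℂ)) = 1 := diagonal_one
  rw [this, mul_one, unit_mul_star hU.1]

private lemma Ci_psd (hU : U.IsHermitian) (i : Fin m) : (Ci hU i).PosSemidef := by
  rw [Ci, star_eq_conjTranspose]
  refine PosSemidef.mul_mul_conjTranspose_same ?_ _
  refine posSemidef_diagonal_iff.mpr fun j => ?_
  rcases eq_or_ne j i with h | h
  · subst h; simp
  · simp [Pi.single_apply, h]

private lemma Ma_sum (hU : U.IsHermitian) (a : Fin m → ℝ) :
    Ma hU a = ∑ i, (a i : ℂ) • Ci hU i := by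
  have hd : diagonal (fun i => (a i : ℂ)) = ∑ i, (a i : ℂ) • diagonal (Pi.single i (1:ℂ)) := by
    ext r c
    rw [Matrix.sum_apply]
    rcases eq_or_ne r c with h | h
    · subst h
      simp [diagonal_apply, Pi.single_apply]
    · simp [diagonal_apply_ne _ h, Pi.single_apply, h]
  rw [Ma, hd, Finset.mul_sum, Finset.sum_mul]
  refine Finset.sum_congr rfl fun i _ => ?_
  rw [mul_smul_comm, smul_mul_assoc, Ci]

private lemma conj_sum (S : Matrix (Fin m) (Fin m) ℂ) (hU : U.IsHermitian) (a : Fin m → ℝ) :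
    S * Ma hU a * S = ∑ i, (a i : ℂ) • (S * Ci hU i * S) := by
  rw [Ma_sum, Finset.mul_sum, Finset.sum_mul]
  exact Finset.sum_congr rfl fun i _ => by rw [mul_smul_comm, smul_mul_assoc]

private lemma gamma_expand {m n k : ℕ} {U : Matrix (Fin m) (Fin m) ℂ}
    {V : Matrix (Fin n) (Fin n) ℂ}
    (Φ : Matrix (Fin m) (Fin m) ℂ →ₗ[ℂ] Matrix (Fin k) (Fin k) ℂ)
    (Ψ : Matrix (Fin n) (Fin n) ℂ →ₗ[ℂ] Matrix (Fin k) (Fin k) ℂ)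
    (S : Matrix (Fin m) (Fin m) ℂ) (T : Matrix (Fin n) (Fin n) ℂ)
    (hU : U.IsHermitian) (hV : V.IsHermitian) (a : Fin m → ℝ) (b : Fin n → ℝ) :
    ((Φ (S * Ma hU a * S) * Ψ (T * Ma hV b * T)).trace).re
      = ∑ i, ∑ j, a i * b j *
          ((Φ (S * Ci hU i * S) * Ψ (T * Ci hV j * T)).trace).re := by
  rw [conj_sum, conj_sum, map_sum, map_sum]
  rw [Finset.sum_mul_sum]
  rw [Matrix.trace_sum, Complex.re_sum]
  refine Finset.sum_congr rfl fun i _ => ?_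
  rw [Matrix.trace_sum, Complex.re_sum]
  refine Finset.sum_congr rfl fun j _ => ?_
  rw [_root_.map_smul, _root_.map_smul, smul_mul_smul_comm, Matrix.trace_smul]
  rw [smul_eq_mul, show ((a i : ℂ) * (b j : ℂ)) = ((a i * b j : ℝ) : ℂ) by push_cast; ring,
    Complex.re_ofReal_mul]

private lemma scalar_amgm {u v : ℝ} (hu : 0 < u) (hv : 0 < v) : 3 ≤ u⁻¹ * v⁻¹ + u + v := by
  have hs := Real.sq_sqrt (mul_pos hu hv).le
  have hsn := Real.sqrt_nonneg (u * v)
  have h2s : 2 * Real.sqrt (u * v) ≤ u + v := by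
    nlinarith [sq_nonneg (Real.sqrt u - Real.sqrt v), Real.sq_sqrt hu.le, Real.sq_sqrt hv.le,
      Real.sqrt_mul_self hu.le, Real.sqrt_mul hu.le v, Real.sqrt_nonneg u, Real.sqrt_nonneg v]
  have hpoly : 3 * (u * v) ≤ 1 + (u * v) * (u + v) := by
    nlinarith [sq_nonneg (1 - Real.sqrt (u * v)), hs, hsn, h2s, mul_pos hu hv,
      mul_nonneg (mul_nonneg hsn hsn) hsn]
  rw [← sub_nonneg]
  have key : u⁻¹ * v⁻¹ + u + v - 3 = (1 + (u * v) * (u + v) - 3 * (u * v)) / (u * v) := by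
    field_simp
    ring
  rw [key]
  exact div_nonneg (by linarith) (mul_pos hu hv).le

/-- The tangent-plane inequality: the key step towards joint convexity. -/
private lemma tangent {m n k : ℕ}
    (Φ : Matrix (Fin m) (Fin m) ℂ →ₗ[ℂ] Matrix (Fin k) (Fin k) ℂ)
    (Ψ : Matrix (Fin n) (Fin n) ℂ →ₗ[ℂ] Matrix (Fin k) (Fin k) ℂ)
    (hΦ : ∀ A : Matrix (Fin m) (Fin m) ℂ, A.PosSemidef → (Φ A).PosSemidef)
    (hΨ : ∀ A : Matrix (Fin n) (Fin n) ℂ, A.PosSemidef → (Ψ A).PosSemidef)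
    {A A₀ : Matrix (Fin m) (Fin m) ℂ} (hA : A.PosDef) (hA₀ : A₀.PosDef)
    {B B₀ : Matrix (Fin n) (Fin n) ℂ} (hB : B.PosDef) (hB₀ : B₀.PosDef) :
    3 * ((Φ A₀⁻¹ * Ψ B₀⁻¹).trace).re ≤
      ((Φ A⁻¹ * Ψ B⁻¹).trace).re + ((Φ (A₀⁻¹ * A * A₀⁻¹) * Ψ B₀⁻¹).trace).re +
        ((Φ A₀⁻¹ * Ψ (B₀⁻¹ * B * B₀⁻¹)).trace).re := by
  set S := hA₀.inv.posSemidef.sqrt with hS_def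
  have hS_herm : S.IsHermitian := hA₀.inv.posSemidef.posSemidef_sqrt.1
  have hS_sq : S * S = A₀⁻¹ := hA₀.inv.posSemidef.sqrt_mul_self
  have hS_unit : IsUnit S := sqrt_isUnit hA₀.inv
  have hS_det : IsUnit S.det := (Matrix.isUnit_iff_isUnit_det S).mp hS_unit
  have hSinv1 : S * S⁻¹ = 1 := Matrix.mul_nonsing_inv S hS_det
  have hSinv2 : S⁻¹ * S = 1 := Matrix.nonsing_inv_mul S hS_det
  have hU : (S * A * S).PosDef := posDef_conj hA hS_herm hS_unit
  set T := hB₀.inv.posSemidef.sqrt with hT_def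
  have hT_herm : T.IsHermitian := hB₀.inv.posSemidef.posSemidef_sqrt.1
  have hT_sq : T * T = B₀⁻¹ := hB₀.inv.posSemidef.sqrt_mul_self
  have hT_unit : IsUnit T := sqrt_isUnit hB₀.inv
  have hT_det : IsUnit T.det := (Matrix.isUnit_iff_isUnit_det T).mp hT_unit
  have hTinv1 : T * T⁻¹ = 1 := Matrix.mul_nonsing_inv T hT_det
  have hTinv2 : T⁻¹ * T = 1 := Matrix.nonsing_inv_mul T hT_det
  have hV : (T * B * T).PosDef := posDef_conj hB hT_herm hT_unit
  -- identities
  have idMidA : A₀⁻¹ * A * A₀⁻¹ = S * Ma hU.1 hU.1.eigenvalues * S := by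
    rw [Ma_eig, ← hS_sq]
    noncomm_ring
  have idA : A⁻¹ = S * Ma hU.1 (fun i => (hU.1.eigenvalues i)⁻¹) * S := by
    rw [Ma_inv hU, Matrix.mul_inv_rev, Matrix.mul_inv_rev]
    have : S * (S⁻¹ * (A⁻¹ * S⁻¹)) * S = S * S⁻¹ * A⁻¹ * (S⁻¹ * S) := by noncomm_ring
    rw [this, hSinv1, hSinv2, one_mul, mul_one]
  have id0A : A₀⁻¹ = S * Ma hU.1 (fun _ => 1) * S := by
    rw [Ma_one, mul_one, hS_sq]
  have idMidB : B₀⁻¹ * B * B₀⁻¹ = T * Ma hV.1 hV.1.eigenvalues * T := by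
    rw [Ma_eig, ← hT_sq]
    noncomm_ring
  have idB : B⁻¹ = T * Ma hV.1 (fun i => (hV.1.eigenvalues i)⁻¹) * T := by
    rw [Ma_inv hV, Matrix.mul_inv_rev, Matrix.mul_inv_rev]
    have : T * (T⁻¹ * (B⁻¹ * T⁻¹)) * T = T * T⁻¹ * B⁻¹ * (T⁻¹ * T) := by noncomm_ring
    rw [this, hTinv1, hTinv2, one_mul, mul_one]
  have id0B : B₀⁻¹ = T * Ma hV.1 (fun _ => 1) * T := by
    rw [Ma_one, mul_one, hT_sq]
  rw [idMidA, idMidB, idA, idB, id0A, id0B]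
  rw [gamma_expand Φ Ψ S T hU.1 hV.1, gamma_expand Φ Ψ S T hU.1 hV.1,
    gamma_expand Φ Ψ S T hU.1 hV.1, gamma_expand Φ Ψ S T hU.1 hV.1]
  rw [Finset.mul_sum, ← Finset.sum_add_distrib, ← Finset.sum_add_distrib]
  refine Finset.sum_le_sum fun i _ => ?_
  rw [Finset.mul_sum, ← Finset.sum_add_distrib, ← Finset.sum_add_distrib]
  refine Finset.sum_le_sum fun j _ => ?_
  have hu : 0 < hU.1.eigenvalues i := hU.eigenvalues_pos i
  have hv : 0 < hV.1.eigenvalues j := hV.eigenvalues_pos j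
  have hγ : 0 ≤ ((Φ (S * Ci hU.1 i * S) * Ψ (T * Ci hV.1 j * T)).trace).re := by
    have h1 : (S * Ci hU.1 i * S).PosSemidef := by
      have := (Ci_psd hU.1 i).conjTranspose_mul_mul_same S
      rwa [hS_herm.eq] at this
    have h2 : (T * Ci hV.1 j * T).PosSemidef := by
      have := (Ci_psd hV.1 j).conjTranspose_mul_mul_same T
      rwa [hT_herm.eq] at this
    exact trace_mul_psd_re_nonneg (hΦ _ h1) (hΨ _ h2)
  have key := mul_nonneg (sub_nonneg.2 (scalar_amgm hu hv)) hγ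
  nlinarith [key]

end TJC


private lemma rsmul_eq (t : ℝ) (X : Matrix (Fin m) (Fin m) ℂ) : t • X = ((t:ℂ)) • X := by
  ext i j
  simp [Complex.real_smul]

private lemma posSemidef_csmul {X : Matrix (Fin m) (Fin m) ℂ} (hX : X.PosSemidef)
    {t : ℝ} (ht : 0 ≤ t) : (((t:ℂ)) • X).PosSemidef := by
  refine Matrix.PosSemidef.of_dotProduct_mulVec_nonneg ?_ ?_
  · rw [Matrix.IsHermitian, conjTranspose_smul, hX.1.eq, Complex.star_def,
      Complex.conj_ofReal]
  · intro x
    rw [smul_mulVec, dotProduct_smul, smul_eq_mul]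
    have h0 : (0:ℂ) ≤ (t:ℂ) := by exact_mod_cast ht
    exact mul_nonneg h0 (hX.dotProduct_mulVec_nonneg x)

private lemma posDef_csmul {X : Matrix (Fin m) (Fin m) ℂ} (hX : X.PosDef)
    {t : ℝ} (ht : 0 < t) : (((t:ℂ)) • X).PosDef := by
  refine Matrix.PosDef.of_dotProduct_mulVec_pos ?_ ?_
  · rw [Matrix.IsHermitian, conjTranspose_smul, hX.1.eq, Complex.star_def,
      Complex.conj_ofReal]
  · intro x hx
    rw [smul_mulVec, dotProduct_smul, smul_eq_mul]
    have h0 : (0:ℂ) < (t:ℂ) := by exact_mod_cast ht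
    exact mul_pos h0 (hX.dotProduct_mulVec_pos hx)

private lemma convex_posDef {X₁ X₂ : Matrix (Fin m) (Fin m) ℂ}
    (h1 : X₁.PosDef) (h2 : X₂.PosDef) {t : ℝ} (ht0 : 0 ≤ t) (ht1 : t ≤ 1) :
    (t • X₁ + (1 - t) • X₂).PosDef := by
  rcases eq_or_lt_of_le ht0 with h | h
  · rw [← h]
    simpa using h2
  · have hpd : ((t:ℂ) • X₁).PosDef := posDef_csmul h1 h
    have hpsd : (((1 - t : ℝ):ℂ) • X₂).PosSemidef := posSemidef_csmul h2.posSemidef (by linarith)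
    rw [rsmul_eq, rsmul_eq]
    exact hpd.add_posSemidef hpsd

private lemma smul_one_psd {l : ℝ} (hl : 0 ≤ l) :
    ((l:ℂ) • (1 : Matrix (Fin m) (Fin m) ℂ)).PosSemidef :=
  posSemidef_csmul (Matrix.PosDef.one).posSemidef hl

private lemma sqrt_collapse {k : ℕ} {P Q : Matrix (Fin k) (Fin k) ℂ} (hP : P.PosSemidef) :
    (cfc Real.sqrt P * Q * cfc Real.sqrt P).trace = (P * Q).trace := by
  have h1 : cfc Real.sqrt P = hP.sqrt := by rw [hP.1.cfc_eq]; rfl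
  rw [h1, trace_mul_cycle, hP.sqrt_mul_self]

theorem trace_jointly_convex {m n k : ℕ} (l μ : ℝ) (hl : 0 ≤ l) (hμ : 0 ≤ μ)
    (Φ : Matrix (Fin m) (Fin m) ℂ →ₗ[ℂ] Matrix (Fin k) (Fin k) ℂ)
    (Ψ : Matrix (Fin n) (Fin n) ℂ →ₗ[ℂ] Matrix (Fin k) (Fin k) ℂ)
    (hΦ : ∀ A : Matrix (Fin m) (Fin m) ℂ, A.PosSemidef → (Φ A).PosSemidef)
    (hΨ : ∀ A : Matrix (Fin n) (Fin n) ℂ, A.PosSemidef → (Ψ A).PosSemidef)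
    (X₁ X₂ : Matrix (Fin m) (Fin m) ℂ) (hX₁ : X₁.PosDef) (hX₂ : X₂.PosDef)
    (Y₁ Y₂ : Matrix (Fin n) (Fin n) ℂ) (hY₁ : Y₁.PosDef) (hY₂ : Y₂.PosDef)
    (t : ℝ) (ht0 : 0 ≤ t) (ht1 : t ≤ 1) :
    ((cfc Real.sqrt (Φ (((l : ℂ) • 1 + (t • X₁ + (1 - t) • X₂))⁻¹)) *
        Ψ (((μ : ℂ) • 1 + (t • Y₁ + (1 - t) • Y₂))⁻¹) *
        cfc Real.sqrt (Φ (((l : ℂ) • 1 + (t • X₁ + (1 - t) • X₂))⁻¹))).trace).re ≤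
      t * ((cfc Real.sqrt (Φ (((l : ℂ) • 1 + X₁)⁻¹)) * Ψ (((μ : ℂ) • 1 + Y₁)⁻¹) *
            cfc Real.sqrt (Φ (((l : ℂ) • 1 + X₁)⁻¹))).trace).re +
      (1 - t) * ((cfc Real.sqrt (Φ (((l : ℂ) • 1 + X₂)⁻¹)) * Ψ (((μ : ℂ) • 1 + Y₂)⁻¹) *
            cfc Real.sqrt (Φ (((l : ℂ) • 1 + X₂)⁻¹))).trace).re := by
  set A₁ : Matrix (Fin m) (Fin m) ℂ := (l:ℂ) • 1 + X₁ with hA₁_def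
  set A₂ : Matrix (Fin m) (Fin m) ℂ := (l:ℂ) • 1 + X₂ with hA₂_def
  set B₁ : Matrix (Fin n) (Fin n) ℂ := (μ:ℂ) • 1 + Y₁ with hB₁_def
  set B₂ : Matrix (Fin n) (Fin n) ℂ := (μ:ℂ) • 1 + Y₂ with hB₂_def
  set At : Matrix (Fin m) (Fin m) ℂ := (l:ℂ) • 1 + (t • X₁ + (1 - t) • X₂) with hAt_def
  set Bt : Matrix (Fin n) (Fin n) ℂ := (μ:ℂ) • 1 + (t • Y₁ + (1 - t) • Y₂) with hBt_def
  have hA₁ : A₁.PosDef := Matrix.PosDef.posSemidef_add (smul_one_psd hl) hX₁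
  have hA₂ : A₂.PosDef := Matrix.PosDef.posSemidef_add (smul_one_psd hl) hX₂
  have hB₁ : B₁.PosDef := Matrix.PosDef.posSemidef_add (smul_one_psd hμ) hY₁
  have hB₂ : B₂.PosDef := Matrix.PosDef.posSemidef_add (smul_one_psd hμ) hY₂
  have hAt : At.PosDef :=
    Matrix.PosDef.posSemidef_add (smul_one_psd hl) (convex_posDef hX₁ hX₂ ht0 ht1)
  have hBt : Bt.PosDef :=
    Matrix.PosDef.posSemidef_add (smul_one_psd hμ) (convex_posDef hY₁ hY₂ ht0 ht1)
  have hAt_eq : At = t • A₁ + (1 - t) • A₂ := by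
    rw [hAt_def, hA₁_def, hA₂_def]
    simp only [rsmul_eq, Complex.ofReal_sub, Complex.ofReal_one]
    module
  have hBt_eq : Bt = t • B₁ + (1 - t) • B₂ := by
    rw [hBt_def, hB₁_def, hB₂_def]
    simp only [rsmul_eq, Complex.ofReal_sub, Complex.ofReal_one]
    module
  rw [sqrt_collapse (hΦ _ hAt.inv.posSemidef), sqrt_collapse (hΦ _ hA₁.inv.posSemidef),
    sqrt_collapse (hΦ _ hA₂.inv.posSemidef)]
  have tan₁ := TJC.tangent Φ Ψ hΦ hΨ hA₁ hAt hB₁ hBt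
  have tan₂ := TJC.tangent Φ Ψ hΦ hΨ hA₂ hAt hB₂ hBt
  have expandA : At⁻¹ = ((t:ℝ):ℂ) • (At⁻¹ * A₁ * At⁻¹) + (((1 - t):ℝ):ℂ) • (At⁻¹ * A₂ * At⁻¹) := by
    have h1 : At⁻¹ * At = 1 :=
      Matrix.nonsing_inv_mul At ((Matrix.isUnit_iff_isUnit_det At).mp hAt.isUnit)
    calc At⁻¹ = At⁻¹ * At * At⁻¹ := by rw [h1, one_mul]
      _ = At⁻¹ * (t • A₁ + (1 - t) • A₂) * At⁻¹ :=
          congrArg (fun Z => At⁻¹ * Z * At⁻¹) hAt_eq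
      _ = _ := by
          simp only [rsmul_eq, mul_add, add_mul, mul_smul_comm, smul_mul_assoc]
  have expandB : Bt⁻¹ = ((t:ℝ):ℂ) • (Bt⁻¹ * B₁ * Bt⁻¹) + (((1 - t):ℝ):ℂ) • (Bt⁻¹ * B₂ * Bt⁻¹) := by
    have h1 : Bt⁻¹ * Bt = 1 :=
      Matrix.nonsing_inv_mul Bt ((Matrix.isUnit_iff_isUnit_det Bt).mp hBt.isUnit)
    calc Bt⁻¹ = Bt⁻¹ * Bt * Bt⁻¹ := by rw [h1, one_mul]
      _ = Bt⁻¹ * (t • B₁ + (1 - t) • B₂) * Bt⁻¹ :=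
          congrArg (fun Z => Bt⁻¹ * Z * Bt⁻¹) hBt_eq
      _ = _ := by
          simp only [rsmul_eq, mul_add, add_mul, mul_smul_comm, smul_mul_assoc]
  have hP : ((Φ At⁻¹ * Ψ Bt⁻¹).trace).re
      = t * ((Φ (At⁻¹ * A₁ * At⁻¹) * Ψ Bt⁻¹).trace).re
        + (1 - t) * ((Φ (At⁻¹ * A₂ * At⁻¹) * Ψ Bt⁻¹).trace).re := by
    conv_lhs => rw [expandA]
    simp only [map_add, _root_.map_smul, add_mul, smul_mul_assoc, Matrix.trace_add,
      Matrix.trace_smul, Complex.add_re, smul_eq_mul, Complex.re_ofReal_mul]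
  have hQ : ((Φ At⁻¹ * Ψ Bt⁻¹).trace).re
      = t * ((Φ At⁻¹ * Ψ (Bt⁻¹ * B₁ * Bt⁻¹)).trace).re
        + (1 - t) * ((Φ At⁻¹ * Ψ (Bt⁻¹ * B₂ * Bt⁻¹)).trace).re := by
    conv_lhs => rw [expandB]
    simp only [map_add, _root_.map_smul, mul_add, mul_smul_comm, Matrix.trace_add,
      Matrix.trace_smul, Complex.add_re, smul_eq_mul, Complex.re_ofReal_mul]
  have e₁ := mul_le_mul_of_nonneg_left tan₁ ht0
  have e₂ := mul_le_mul_of_nonneg_left tan₂ (by linarith : (0:ℝ) ≤ 1 - t)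
  ring_nf at e₁ e₂ hP hQ ⊢
  linarith [e₁, e₂, hP, hQ]
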